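/- There do not exist elements σ, τ ∈ GL_3(ℤ/9ℤ) with σ³ = τ³ = 1 and στ = τσ, such that σ reduces modulo 3 to I + E_{12} and τ reduces modulo 3 to I + E_{13} in GL_3(𝔽_3). -/

import Mathlib

private lemma L00 : ∀ x y : ZMod 9, (ZMod.cast x : ZMod 3) = 0 →
    (ZMod.cast y : ZMod 3) = 0 → x * y = 0 := by decide

private lemma L01 : ∀ x y : ZMod 9, (ZMod.cast x : ZMod 3) = 0 →
    (ZMod.cast y : ZMod 3) = 1 → x * y = x := by decide

private lemma L10 : ∀ x y : ZMod 9, (ZMod.cast x : ZMod 3) = 1 →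
    (ZMod.cast y : ZMod 3) = 0 → x * y = y := by decide

private lemma Ltriple : ∀ x y z : ZMod 9, (ZMod.cast x : ZMod 3) = 1 →
    (ZMod.cast y : ZMod 3) = 1 → (ZMod.cast z : ZMod 3) = 1 →
    x * x * y + x * y * z + y * z * z = 3 := by decide

/-- There do not exist commuting elements `σ, τ ∈ GL_3(ℤ/9ℤ)` with `σ³ = τ³ = 1`
such that `σ` reduces modulo `3` to `I + E₁₂` and `τ` reduces modulo `3` to `I + E₁₃`. -/
theorem no_lift_of_N_mod_nine :
    ¬ ∃ (σ τ : (Matrix (Fin 3) (Fin 3) (ZMod 9))ˣ),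
        σ ^ 3 = 1 ∧ τ ^ 3 = 1 ∧ σ * τ = τ * σ ∧
        ((σ : Matrix (Fin 3) (Fin 3) (ZMod 9)).map
            (ZMod.castHom (show 3 ∣ 9 by norm_num) (ZMod 3))
          = 1 + Matrix.single 0 1 1) ∧
        ((τ : Matrix (Fin 3) (Fin 3) (ZMod 9)).map
            (ZMod.castHom (show 3 ∣ 9 by norm_num) (ZMod 3))
          = 1 + Matrix.single 0 2 1) := by
  rintro ⟨σ, τ, h1, -, h3, h4, h5⟩
  set M : Matrix (Fin 3) (Fin 3) (ZMod 9) := (σ : Matrix (Fin 3) (Fin 3) (ZMod 9)) with hM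
  set N : Matrix (Fin 3) (Fin 3) (ZMod 9) := (τ : Matrix (Fin 3) (Fin 3) (ZMod 9)) with hN
  -- entry residues of M
  have hm00 := congrFun (congrFun h4 0) 0
  have hm01 := congrFun (congrFun h4 0) 1
  have hm02 := congrFun (congrFun h4 0) 2
  have hm10 := congrFun (congrFun h4 1) 0
  have hm11 := congrFun (congrFun h4 1) 1
  have hm12 := congrFun (congrFun h4 1) 2
  have hm20 := congrFun (congrFun h4 2) 0
  have hm21 := congrFun (congrFun h4 2) 1
  have hm22 := congrFun (congrFun h4 2) 2
  have hn02 := congrFun (congrFun h5 0) 2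
  have hn10 := congrFun (congrFun h5 1) 0
  have hn11 := congrFun (congrFun h5 1) 1
  have hn12 := congrFun (congrFun h5 1) 2
  have hn22 := congrFun (congrFun h5 2) 2
  simp [Matrix.add_apply, Matrix.one_apply, Matrix.single] at hm00 hm01 hm02 hm10 hm11 hm12 hm20 hm21 hm22 hn02 hn10 hn11 hn12 hn22
  -- matrix equations
  have e1 : M * M * M = 1 := by
    have := congrArg Units.val h1
    simpa [pow_succ, Units.val_mul] using this
  have e2 : M * N = N * M := by
    have := congrArg Units.val h3
    simpa [Units.val_mul] using this
  have E1 := congrFun (congrFun e1 0) 1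
  have E2 := congrFun (congrFun e2 1) 2
  simp [Matrix.mul_apply, Fin.sum_univ_three, Matrix.one_apply] at E1 E2
  -- commutation forces M 1 0 = 0
  have p1 : M 1 0 * N 0 2 = M 1 0 := L01 _ _ hm10 hn02
  have p2 : M 1 1 * N 1 2 = N 1 2 := L10 _ _ hm11 hn12
  have p3 : M 1 2 * N 2 2 = M 1 2 := L01 _ _ hm12 hn22
  have p4 : N 1 0 * M 0 2 = 0 := L00 _ _ hn10 hm02
  have p5 : N 1 1 * M 1 2 = M 1 2 := L10 _ _ hn11 hm12
  have p6 : N 1 2 * M 2 2 = N 1 2 := L01 _ _ hn12 hm22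
  have g5 : M 1 0 = 0 := by linear_combination E2 - p1 - p2 - p3 + p4 + p5 + p6
  -- σ³ = 1 forces a contradiction
  have hT := Ltriple _ _ _ hm00 hm01 hm11
  have g2 : M 0 2 * M 2 0 = 0 := L00 _ _ hm02 hm20
  have g3 : M 0 2 * M 2 1 = 0 := L00 _ _ hm02 hm21
  have g4 : M 1 2 * M 2 1 = 0 := L00 _ _ hm12 hm21
  have h30 : (3 : ZMod 9) = 0 := by
    linear_combination E1 - hT - (M 0 1 * M 0 1) * g5 - M 0 1 * g2 - M 1 1 * g3
      - M 0 0 * g3 - M 0 1 * g4 - M 2 2 * g3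
  exact absurd h30 (by decide)
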